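/- Let c, m > 0 and θ ∈ ℝ, and define γ : ℝ → ℝ³ by γ(s) = m·e^{(cos θ/√(1+c²))·s}·(c·cos((sin θ/c)·s), c·sin((sin θ/c)·s), 1). Then for every s there exists λ(s) ∈ ℝ such that the hyperbolic covariant acceleration A(s) = γ''(s) − (2·γ₃'(s)/γ₃(s))·γ'(s) + (‖γ'(s)‖ₑ²/γ₃(s))·e₃ satisfies A(s) = λ(s)·(γ₁(s), γ₂(s), −c²·γ₃(s)); that is, A(s) is proportional to the Euclidean gradient of f(x,y,z) = x² + y² − c²z² at γ(s), so γ is a geodesic of the Killing cylinder x² + y² = c²z² in ℍ³. -/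

import Mathlib

open Real
open scoped RealInnerProductSpace

/-- A point/vector of Euclidean 3-space. -/
noncomputable def v3 (x y z : ℝ) : EuclideanSpace ℝ (Fin 3) := WithLp.toLp 2 ![x, y, z]

/-- Hyperbolic (upper half-space) inner product of u and v at the point p. -/
noncomputable def hInner (p u v : EuclideanSpace ℝ (Fin 3)) : ℝ := ⟪u, v⟫ / (p 2) ^ 2

/-- Hyperbolic (upper half-space) norm of v at the point p. -/
noncomputable def hNorm (p v : EuclideanSpace ℝ (Fin 3)) : ℝ := ‖v‖ / p 2

/-- Covariant acceleration ∇_{γ'}γ' of a hyperbolic unit-speed curve in the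
upper half-space model: A(s) = γ''(s) − (2γ₃'(s)/γ₃(s))·γ'(s) + (‖γ'(s)‖ₑ²/γ₃(s))·e₃. -/
noncomputable def hAccel (γ : ℝ → EuclideanSpace ℝ (Fin 3)) (s : ℝ) :
    EuclideanSpace ℝ (Fin 3) :=
  deriv (deriv γ) s - (2 * deriv (fun t => γ t 2) s / γ s 2) • deriv γ s
    + (‖deriv γ s‖ ^ 2 / γ s 2) • v3 0 0 1


set_option linter.unnecessarySeqFocus false
set_option linter.unusedTactic false

lemma v3_zero : v3 0 0 1 2 = 1 := rfl

lemma hasDerivAt_v3 {f1 f2 f3 : ℝ → ℝ} {f1' f2' f3' : ℝ} {s : ℝ}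
    (h1 : HasDerivAt f1 f1' s) (h2 : HasDerivAt f2 f2' s) (h3 : HasDerivAt f3 f3' s) :
    HasDerivAt (fun t => v3 (f1 t) (f2 t) (f3 t)) (v3 f1' f2' f3') s := by
  have e1 : (fun t => v3 (f1 t) (f2 t) (f3 t))
      = fun t => f1 t • v3 1 0 0 + f2 t • v3 0 1 0 + f3 t • v3 0 0 1 := by
    funext t; ext i; fin_cases i <;> simp [v3]
  have e2 : v3 f1' f2' f3' = f1' • v3 1 0 0 + f2' • v3 0 1 0 + f3' • v3 0 0 1 := by
    ext i; fin_cases i <;> simp [v3]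
  rw [e1, e2]
  exact ((h1.smul_const _).add (h2.smul_const _)).add (h3.smul_const _)

lemma norm_v3_sq (x y z : ℝ) : ‖v3 x y z‖ ^ 2 = x ^ 2 + y ^ 2 + z ^ 2 := by
  rw [EuclideanSpace.norm_eq, Real.sq_sqrt (by positivity)]
  simp [v3, Fin.sum_univ_three, sq_abs]


lemma aux (a b c m : ℝ) (hm : 0 < m)
    (γ : ℝ → EuclideanSpace ℝ (Fin 3))
    (hγ : γ = fun s => (m * Real.exp (a * s)) •
        v3 (c * Real.cos (b * s)) (c * Real.sin (b * s)) 1) :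
    ∀ s : ℝ, ∃ lam : ℝ,
      hAccel γ s = lam • v3 (γ s 0) (γ s 1) (-(c ^ 2) * γ s 2) := by
  have hγ' : γ = fun t => v3 (m * Real.exp (a*t) * (c * Real.cos (b*t)))
      (m * Real.exp (a*t) * (c * Real.sin (b*t))) (m * Real.exp (a*t)) := by
    rw [hγ]; funext t; ext i; fin_cases i <;> simp [v3]
  -- scalar derivative facts
  have hg : ∀ t : ℝ, HasDerivAt (fun u => m * Real.exp (a*u)) (a * (m * Real.exp (a*t))) t := by
    intro t
    have h := (((hasDerivAt_id t).const_mul a).exp).const_mul m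
    exact h.congr_deriv (by simp only [id_eq]; ring)
  have hcos : ∀ t : ℝ, HasDerivAt (fun u => c * Real.cos (b*u)) (-(c*b) * Real.sin (b*t)) t := by
    intro t
    have h := (((hasDerivAt_id t).const_mul b).cos).const_mul c
    exact h.congr_deriv (by simp only [id_eq]; ring)
  have hsin : ∀ t : ℝ, HasDerivAt (fun u => c * Real.sin (b*u)) ((c*b) * Real.cos (b*t)) t := by
    intro t
    have h := (((hasDerivAt_id t).const_mul b).sin).const_mul c
    exact h.congr_deriv (by simp only [id_eq]; ring)
  have h1 : ∀ t : ℝ, HasDerivAt (fun u => m * Real.exp (a*u) * (c * Real.cos (b*u)))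
      (m * Real.exp (a*t) * (c * (a * Real.cos (b*t) - b * Real.sin (b*t)))) t := by
    intro t
    have h := (hg t).mul (hcos t)
    exact h.congr_deriv (by ring)
  have h2 : ∀ t : ℝ, HasDerivAt (fun u => m * Real.exp (a*u) * (c * Real.sin (b*u)))
      (m * Real.exp (a*t) * (c * (a * Real.sin (b*t) + b * Real.cos (b*t)))) t := by
    intro t
    have h := (hg t).mul (hsin t)
    exact h.congr_deriv (by ring)
  -- first derivative of γ
  have hd : ∀ t : ℝ, HasDerivAt γ
      (v3 (m * Real.exp (a*t) * (c * (a * Real.cos (b*t) - b * Real.sin (b*t))))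
          (m * Real.exp (a*t) * (c * (a * Real.sin (b*t) + b * Real.cos (b*t))))
          (a * (m * Real.exp (a*t)))) t := by
    intro t
    rw [hγ']
    exact hasDerivAt_v3 (h1 t) (h2 t) (hg t)
  have hdγ : deriv γ = fun t =>
      v3 (m * Real.exp (a*t) * (c * (a * Real.cos (b*t) - b * Real.sin (b*t))))
          (m * Real.exp (a*t) * (c * (a * Real.sin (b*t) + b * Real.cos (b*t))))
          (a * (m * Real.exp (a*t))) := funext fun t => (hd t).deriv
  intro s
  -- second derivative at s
  have hD1 : HasDerivAt (fun t => m * Real.exp (a*t) * (c * (a * Real.cos (b*t) - b * Real.sin (b*t))))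
      (m * Real.exp (a*s) * (c * ((a^2 - b^2) * Real.cos (b*s) - 2*a*b * Real.sin (b*s)))) s := by
    have hin : HasDerivAt (fun u => c * (a * Real.cos (b*u) - b * Real.sin (b*u)))
        (c * (a * (-Real.sin (b*s) * b) - b * (Real.cos (b*s) * b))) s := by
      exact (((((hasDerivAt_id s).const_mul b).cos.const_mul a).sub
        (((hasDerivAt_id s).const_mul b).sin.const_mul b)).const_mul c).congr_deriv (by simp only [id_eq]; ring)
    have h := (hg s).mul hin
    exact h.congr_deriv (by ring)
  have hD2 : HasDerivAt (fun t => m * Real.exp (a*t) * (c * (a * Real.sin (b*t) + b * Real.cos (b*t))))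
      (m * Real.exp (a*s) * (c * ((a^2 - b^2) * Real.sin (b*s) + 2*a*b * Real.cos (b*s)))) s := by
    have hin : HasDerivAt (fun u => c * (a * Real.sin (b*u) + b * Real.cos (b*u)))
        (c * (a * (Real.cos (b*s) * b) + b * (-Real.sin (b*s) * b))) s := by
      exact (((((hasDerivAt_id s).const_mul b).sin.const_mul a).add
        (((hasDerivAt_id s).const_mul b).cos.const_mul b)).const_mul c).congr_deriv (by simp only [id_eq]; ring)
    have h := (hg s).mul hin
    exact h.congr_deriv (by ring)
  have hD3 : HasDerivAt (fun t => a * (m * Real.exp (a*t))) (a^2 * (m * Real.exp (a*s))) s := by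
    have h := (hg s).const_mul a
    exact h.congr_deriv (by ring)
  have hdd : deriv (deriv γ) s =
      v3 (m * Real.exp (a*s) * (c * ((a^2 - b^2) * Real.cos (b*s) - 2*a*b * Real.sin (b*s))))
         (m * Real.exp (a*s) * (c * ((a^2 - b^2) * Real.sin (b*s) + 2*a*b * Real.cos (b*s))))
         (a^2 * (m * Real.exp (a*s))) := by
    rw [hdγ]
    exact (hasDerivAt_v3 hD1 hD2 hD3).deriv
  have hcomp : (fun t => γ t 2) = fun t => m * Real.exp (a*t) := by
    rw [hγ']; funext t; rfl
  have hd3 : deriv (fun t => γ t 2) s = a * (m * Real.exp (a*s)) := by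
    rw [hcomp]; exact (hg s).deriv
  have hg0 : m * Real.exp (a*s) ≠ 0 := by positivity
  have hγ2 : γ s 2 = m * Real.exp (a*s) := by rw [hγ']; rfl
  have hγ0 : γ s 0 = m * Real.exp (a*s) * (c * Real.cos (b*s)) := by rw [hγ']; rfl
  have hγ1 : γ s 1 = m * Real.exp (a*s) * (c * Real.sin (b*s)) := by rw [hγ']; rfl
  refine ⟨-(a^2 + b^2), ?_⟩
  have hpyth := Real.sin_sq_add_cos_sq (b*s)
  unfold hAccel
  rw [hdd, hdγ, hd3, hγ2, hγ0, hγ1, norm_v3_sq]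
  ext i
  have simp0 : True := trivial
  fin_cases i
  · simp only [v3, PiLp.add_apply, PiLp.sub_apply, PiLp.smul_apply, smul_eq_mul,
      Matrix.cons_val_zero, Matrix.cons_val_one, Matrix.head_cons, Fin.zero_eta, Fin.mk_one, Fin.reduceFinMk]
    field_simp
    ring
  · simp only [v3, PiLp.add_apply, PiLp.sub_apply, PiLp.smul_apply, smul_eq_mul,
      Matrix.cons_val_zero, Matrix.cons_val_one, Matrix.head_cons, Fin.zero_eta, Fin.mk_one, Fin.reduceFinMk]
    field_simp
    ring
  · simp only [v3, PiLp.add_apply, PiLp.sub_apply, PiLp.smul_apply, smul_eq_mul,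
      Matrix.cons_val_zero, Matrix.cons_val_one, Matrix.head_cons, Fin.zero_eta, Fin.mk_one, Fin.reduceFinMk, Matrix.cons_val_two,
      Matrix.tail_cons]
    field_simp
    linear_combination (c^2*(a^2+b^2)) * (Real.sin_sq_add_cos_sq (s*b))


/-- For the helix γ(s) = m·e^{(cos θ/√(1+c²))s}·(c cos((sin θ/c)s),
c sin((sin θ/c)s), 1), the hyperbolic covariant acceleration A(s) is proportional to
the Euclidean gradient (γ₁, γ₂, −c²γ₃) of f(x,y,z) = x² + y² − c²z² at γ(s); hence γ is a
geodesic of the Killing cylinder x² + y² = c²z² in ℍ³. -/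
theorem stmt_11 (c m θ : ℝ) (hc : 0 < c) (hm : 0 < m)
    (γ : ℝ → EuclideanSpace ℝ (Fin 3))
    (hγ : γ = fun s => (m * Real.exp ((Real.cos θ / Real.sqrt (1 + c ^ 2)) * s)) •
        v3 (c * Real.cos ((Real.sin θ / c) * s)) (c * Real.sin ((Real.sin θ / c) * s)) 1) :
    ∀ s : ℝ, ∃ lam : ℝ,
      hAccel γ s = lam • v3 (γ s 0) (γ s 1) (-(c ^ 2) * γ s 2) := by
  exact aux (Real.cos θ / Real.sqrt (1 + c ^ 2)) (Real.sin θ / c) c m hm γ hγ
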